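/- Let n, d, d' be positive integers and λ > 0. For each i = 1,…,n let h_i ∈ ℝ^d and let ℓ_i : ℝ^{d'} → ℝ be differentiable. Define L_λ(W) = (1/n)·Σ_{i=1}^n ℓ_i(W h_i) + (λ/2)·‖W‖_F² for W ∈ ℝ^{d'×d}, and define the FACT matrix F := −(1/(nλ))·Σ_{i=1}^n (W^⊤ ∇ℓ_i(W h_i)) h_i^⊤ ∈ ℝ^{d×d}. If W is a critical point of L_λ, then (W^⊤ W)² = F·F^⊤; consequently, W^⊤ W is the unique positive semidefinite square root of F·F^⊤, i.e. W^⊤ W = √(F·F^⊤). -/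

import Mathlib

open Matrix

attribute [local instance] Matrix.frobeniusSeminormedAddCommGroup
  Matrix.frobeniusNormedAddCommGroup Matrix.frobeniusNormedSpace

/-- The gradient of a function `f : ℝ^k → ℝ`, as a plain vector `Fin k → ℝ`. -/
noncomputable def grad {k : ℕ} (f : EuclideanSpace ℝ (Fin k) → ℝ) (x : Fin k → ℝ) :
    Fin k → ℝ :=
  WithLp.equiv 2 (Fin k → ℝ) <| gradient f ((WithLp.equiv 2 (Fin k → ℝ)).symm x)

/-- The positive semidefinite square root of a positive semidefinite matrix (removed from
Mathlib; restored here with its former definition). -/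
noncomputable def Matrix.PosSemidef.sqrt {n 𝕜 : Type*} [Fintype n] [DecidableEq n] [RCLike 𝕜]
    [PartialOrder 𝕜] {A : Matrix n n 𝕜} (hA : A.PosSemidef) : Matrix n n 𝕜 :=
  hA.1.eigenvectorUnitary.1 * diagonal ((↑) ∘ (√·) ∘ hA.1.eigenvalues) *
    (star hA.1.eigenvectorUnitary : Matrix n n 𝕜)

/-- The linear map `V ↦ V *ᵥ hv`, as a continuous linear map from matrices (with the
Frobenius norm) to Euclidean space. -/
noncomputable def mvCLM (d d' : ℕ) (hv : Fin d → ℝ) :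
    Matrix (Fin d') (Fin d) ℝ →L[ℝ] EuclideanSpace ℝ (Fin d') :=
  LinearMap.toContinuousLinearMap
    { toFun := fun V => (WithLp.equiv 2 (Fin d' → ℝ)).symm (V.mulVec hv)
      map_add' := by intro x y; ext c; simp [Matrix.add_mulVec]
      map_smul' := by intro c x; ext j; simp [Matrix.smul_mulVec] }

/-- Entry evaluation `V ↦ V a b` as a continuous linear map. -/
noncomputable def evCLM (d d' : ℕ) (a : Fin d') (b : Fin d) :
    Matrix (Fin d') (Fin d) ℝ →L[ℝ] ℝ :=
  LinearMap.toContinuousLinearMap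
    { toFun := fun V => V a b
      map_add' := by intro x y; simp
      map_smul' := by intro c x; simp }

/-- The Fréchet derivative of the regularized loss. -/
theorem loss_hasFDerivAt (n d d' : ℕ) (lam : ℝ)
    (h : Fin n → Fin d → ℝ)
    (ℓ : Fin n → EuclideanSpace ℝ (Fin d') → ℝ)
    (hdiff : ∀ i, Differentiable ℝ (ℓ i))
    (W : Matrix (Fin d') (Fin d) ℝ) :
    HasFDerivAt
      (fun V : Matrix (Fin d') (Fin d) ℝ =>
        (1 / n : ℝ) * ∑ i, ℓ i ((WithLp.equiv 2 (Fin d' → ℝ)).symm (V.mulVec (h i)))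
          + (lam / 2) * ∑ a : Fin d', ∑ b : Fin d, V a b ^ 2)
      ((1 / n : ℝ) • (∑ i, (fderiv ℝ (ℓ i) (mvCLM d d' (h i) W)).comp (mvCLM d d' (h i)))
        + (lam / 2) • ∑ a : Fin d', ∑ b : Fin d, ((2 : ℝ) * W a b) • evCLM d d' a b) W := by
  have h1 : ∀ i : Fin n, HasFDerivAt
      (fun V : Matrix (Fin d') (Fin d) ℝ =>
        ℓ i ((WithLp.equiv 2 (Fin d' → ℝ)).symm (V.mulVec (h i))))
      ((fderiv ℝ (ℓ i) (mvCLM d d' (h i) W)).comp (mvCLM d d' (h i))) W := by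
    intro i
    exact ((hdiff i (mvCLM d d' (h i) W)).hasFDerivAt).comp W (mvCLM d d' (h i)).hasFDerivAt
  have h2 := HasFDerivAt.fun_sum (fun i (_ : i ∈ Finset.univ) => h1 i)
  have h3 := h2.const_mul (1 / n : ℝ)
  have h4 : ∀ (a : Fin d') (b : Fin d), HasFDerivAt
      (fun V : Matrix (Fin d') (Fin d) ℝ => V a b ^ 2)
      (((2 : ℝ) * W a b) • evCLM d d' a b) W := by
    intro a b
    have h0 := (evCLM d d' a b).hasFDerivAt (x := W)
    have := h0.mul h0
    have h2 : (fun V : Matrix (Fin d') (Fin d) ℝ => V a b ^ 2)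
        = fun V => evCLM d d' a b V * evCLM d d' a b V := by
      funext V; simp [sq]; rfl
    rw [h2]
    refine this.congr_fderiv (Eq.symm ?_)
    show ((2:ℝ) * W a b) • evCLM d d' a b = _
    rw [two_mul, add_smul]
    rfl
  have h5 : ∀ a : Fin d', HasFDerivAt
      (fun V : Matrix (Fin d') (Fin d) ℝ => ∑ b : Fin d, V a b ^ 2)
      (∑ b : Fin d, ((2 : ℝ) * W a b) • evCLM d d' a b) W :=
    fun a => HasFDerivAt.fun_sum (fun b _ => h4 a b)
  have h6 := HasFDerivAt.fun_sum (fun a (_ : a ∈ Finset.univ) => h5 a)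
  have h7 := h6.const_mul (lam / 2)
  exact h3.add h7

/-- A Fréchet derivative of a scalar function on Euclidean space, evaluated at a vector,
is the inner product with the gradient. -/
lemma fderiv_eq_sum_gradient {k : ℕ} (f : EuclideanSpace ℝ (Fin k) → ℝ)
    (x v : EuclideanSpace ℝ (Fin k)) :
    fderiv ℝ f x v = ∑ c, gradient f x c * v c := by
  have h1 : fderiv ℝ f x v = inner ℝ (gradient f x) v := by
    rw [gradient, InnerProductSpace.toDual_symm_apply]
  rw [h1, PiLp.inner_apply]
  simp [RCLike.inner_apply, mul_comm]

/-- **Square-root symmetrization of the FACT.** If `W` is a critical point of the regularized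
loss, then `(Wᵀ W)² = F Fᵀ` where `F` is the FACT matrix; consequently `Wᵀ W` is the unique
positive semidefinite square root of `F Fᵀ`, i.e. `Wᵀ W = √(F Fᵀ)`. -/
theorem fact_sqrt_symmetrization
    (n d d' : ℕ) (hn : 0 < n) (hd : 0 < d) (hd' : 0 < d')
    (lam : ℝ) (hlam : 0 < lam)
    (h : Fin n → Fin d → ℝ)
    (ℓ : Fin n → EuclideanSpace ℝ (Fin d') → ℝ)
    (hdiff : ∀ i, Differentiable ℝ (ℓ i))
    (W : Matrix (Fin d') (Fin d) ℝ)
    (F : Matrix (Fin d) (Fin d) ℝ)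
    (hF : F = (-(1 / (n * lam))) •
      ∑ i, Matrix.vecMulVec (Wᵀ.mulVec (grad (ℓ i) (W.mulVec (h i)))) (h i))
    (hcrit : fderiv ℝ
      (fun V : Matrix (Fin d') (Fin d) ℝ =>
        (1 / n : ℝ) * ∑ i, ℓ i ((WithLp.equiv 2 (Fin d' → ℝ)).symm (V.mulVec (h i)))
          + (lam / 2) * ∑ a : Fin d', ∑ b : Fin d, V a b ^ 2) W = 0) :
    (Wᵀ * W) ^ 2 = F * Fᵀ ∧
      ∀ hp : (F * Fᵀ).PosSemidef, Wᵀ * W = hp.sqrt := by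
  -- the critical point equation for the explicit derivative
  have hD : ((1 / n : ℝ) •
        (∑ i, (fderiv ℝ (ℓ i) (mvCLM d d' (h i) W)).comp (mvCLM d d' (h i)))
        + (lam / 2) • ∑ a : Fin d', ∑ b : Fin d, ((2 : ℝ) * W a b) • evCLM d d' a b
        : Matrix (Fin d') (Fin d) ℝ →L[ℝ] ℝ) = 0 := by
    rw [← (loss_hasFDerivAt n d d' lam h ℓ hdiff W).fderiv]
    exact hcrit
  set g : Fin n → Fin d' → ℝ := fun i => grad (ℓ i) (W.mulVec (h i)) with hgdef
  -- entrywise formula for W at the critical point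
  have hW : ∀ a b, W a b = (-(1 / (n * lam))) * ∑ i, g i a * h i b := by
    intro a b
    have hE := congrArg (fun L : Matrix (Fin d') (Fin d) ℝ →L[ℝ] ℝ =>
      L (Matrix.single a b 1)) hD
    simp only [ContinuousLinearMap.add_apply, ContinuousLinearMap.smul_apply,
      ContinuousLinearMap.coe_sum', Finset.sum_apply, ContinuousLinearMap.coe_comp',
      Function.comp_apply, ContinuousLinearMap.zero_apply, smul_eq_mul] at hE
    have hev : ∀ (c : Fin d') (e : Fin d),
        evCLM d d' c e (Matrix.single a b 1) = if c = a ∧ e = b then 1 else 0 := by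
      intro c e
      show Matrix.single a b 1 c e = _
      simp [Matrix.single, eq_comm, and_comm]
    have hmv : ∀ i : Fin n, (mvCLM d d' (h i)) (Matrix.single a b 1)
        = (WithLp.equiv 2 (Fin d' → ℝ)).symm (fun c => if c = a then h i b else 0) := by
      intro i
      show (WithLp.equiv 2 (Fin d' → ℝ)).symm
        ((Matrix.single a b 1).mulVec (h i)) = _
      congr 1
      funext c
      simp [Matrix.mulVec, dotProduct, Matrix.single, ite_and, eq_comm]
    have hdata : ∀ i : Fin n,
        fderiv ℝ (ℓ i) (mvCLM d d' (h i) W) ((mvCLM d d' (h i)) (Matrix.single a b 1))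
        = gradient (ℓ i) (mvCLM d d' (h i) W) a * h i b := by
      intro i
      rw [hmv i, fderiv_eq_sum_gradient]
      rw [Finset.sum_eq_single a]
      · simp [Equiv.refl_apply]
      · intro c _ hc; simp [Equiv.refl_apply, hc]
      · simp
    rw [Finset.sum_congr rfl (fun i _ => hdata i)] at hE
    have hquad : (∑ c : Fin d', ∑ e : Fin d,
        2 * W c e * evCLM d d' c e (Matrix.single a b 1)) = 2 * W a b := by
      rw [Finset.sum_congr rfl (fun c _ => Finset.sum_congr rfl (fun e _ => by rw [hev]))]
      simp [ite_and, mul_ite]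
    rw [hquad] at hE
    have hg : ∀ i, g i a = gradient (ℓ i) (mvCLM d d' (h i) W) a := by
      intro i; rfl
    have hn' : (n : ℝ) ≠ 0 := Nat.cast_ne_zero.mpr hn.ne'
    have hl' : lam ≠ 0 := hlam.ne'
    simp only [hg]
    field_simp at hE ⊢
    linarith [hE]
  -- F equals Wᵀ W
  have hFW : F = Wᵀ * W := by
    ext a b
    rw [hF]
    simp only [Matrix.smul_apply, Matrix.sum_apply, Matrix.vecMulVec_apply,
      Matrix.mul_apply, Matrix.transpose_apply, Matrix.mulVec, dotProduct, smul_eq_mul,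
      ← hgdef]
    have hRHS : ∑ c : Fin d', W c a * W c b
        = ∑ i, (-(1 / ((n:ℝ) * lam))) * ((∑ c : Fin d', W c a * g i c) * h i b) := by
      rw [Finset.sum_congr rfl (fun c (_ : c ∈ Finset.univ) => by rw [hW c b])]
      simp only [Finset.mul_sum, Finset.sum_mul]
      rw [Finset.sum_comm]
      exact Finset.sum_congr rfl fun i _ => Finset.sum_congr rfl fun c _ => by ring
    rw [hRHS, Finset.mul_sum]
  have hsq : (Wᵀ * W) ^ 2 = F * Fᵀ := by
    rw [hFW, Matrix.transpose_mul, Matrix.transpose_transpose, sq]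
  refine ⟨hsq, fun hp => ?_⟩
  have hps : (Wᵀ * W).PosSemidef := by
    have := Matrix.posSemidef_conjTranspose_mul_self W
    simpa using this
  have key : hp.sqrt = cfc Real.sqrt (F * Fᵀ) := by
    rw [hp.1.cfc_eq]; rfl
  rw [key, ← hsq]
  refine Eq.trans ?_ (cfc_comp_pow Real.sqrt 2 (Wᵀ * W) (by fun_prop) hps.1)
  conv_lhs => rw [← cfc_id ℝ (Wᵀ * W) hps.1]
  refine cfc_congr fun x hx => ?_
  rw [hps.1.spectrum_real_eq_range_eigenvalues] at hx
  obtain ⟨i, rfl⟩ := hx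
  exact (Real.sqrt_sq (hps.eigenvalues_nonneg i)).symm
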